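/- Let (x, z, θ) solve x' = cos θ, z' = sin θ, θ' = 2λ + cos θ − sin θ/x on an interval with x > 0. Then for all s, s₀ in the interval: x(s) sin θ(s) − λ x(s)² = x(s₀) sin θ(s₀) − λ x(s₀)² + ∫_{s₀}^{s} x(t) x'(t)² dt. -/

import Mathlib

/-- First integral for the profile curve of a rotational `λ`-translating soliton:
if `x' = cos θ`, `z' = sin θ`, `θ' = 2λ + cos θ - sin θ/x` on an open interval with
`x > 0`, then for all `s, s₀` in the interval,
`x(s) sin θ(s) - λ x(s)² = x(s₀) sin θ(s₀) - λ x(s₀)² + ∫_{s₀}^{s} x(t) x'(t)² dt`. -/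
theorem stmt16 (lam : ℝ) (S : Set ℝ) (hSo : IsOpen S) (hconv : Convex ℝ S)
    (x z θ : ℝ → ℝ)
    (hxpos : ∀ s ∈ S, 0 < x s)
    (hx : ∀ s ∈ S, HasDerivAt x (Real.cos (θ s)) s)
    (hz : ∀ s ∈ S, HasDerivAt z (Real.sin (θ s)) s)
    (hθ : ∀ s ∈ S, HasDerivAt θ
      (2*lam + Real.cos (θ s) - Real.sin (θ s) / x s) s) :
    ∀ s ∈ S, ∀ s₀ ∈ S,
      x s * Real.sin (θ s) - lam * (x s)^2
        = x s₀ * Real.sin (θ s₀) - lam * (x s₀)^2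
          + ∫ t in s₀..s, x t * (Real.cos (θ t))^2 := by
  intro s hs s₀ hs₀
  set F : ℝ → ℝ := fun t => x t * Real.sin (θ t) - lam * (x t)^2 with hF
  have hsub : Set.uIcc s₀ s ⊆ S := hconv.ordConnected.uIcc_subset hs₀ hs
  have hderiv : ∀ t ∈ S, HasDerivAt F (x t * (Real.cos (θ t))^2) t := by
    intro t ht
    have hxt := hx t ht
    have hθt := hθ t ht
    have hxpos' := hxpos t ht
    have h1 : HasDerivAt (fun u => x u * Real.sin (θ u))
        (Real.cos (θ t) * Real.sin (θ t)
          + x t * (Real.cos (θ t) * (2*lam + Real.cos (θ t) - Real.sin (θ t) / x t))) t :=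
      hxt.mul (((Real.hasDerivAt_sin (θ t)).comp t hθt))
    have h2 : HasDerivAt (fun u => lam * (x u)^2)
        (lam * (2 * x t * Real.cos (θ t))) t := by
      have := (hxt.pow 2)
      simpa [mul_comm, mul_assoc, mul_left_comm] using this.const_mul lam
    have h := h1.sub h2
    convert h using 1
    · rfl
    · rfl
    · rfl
    field_simp
    ring
  have hcont : ContinuousOn (fun t => x t * (Real.cos (θ t))^2) (Set.uIcc s₀ s) := by
    intro t ht
    have ht' := hsub ht
    exact (((hx t ht').continuousAt.mul
      (((Real.continuous_cos.continuousAt).comp (hθ t ht').continuousAt).pow 2)).continuousWithinAt)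
  have hint : IntervalIntegrable (fun t => x t * (Real.cos (θ t))^2)
      MeasureTheory.volume s₀ s := hcont.intervalIntegrable
  have := intervalIntegral.integral_eq_sub_of_hasDerivAt
    (fun t ht => hderiv t (hsub ht)) hint
  rw [this]; ring
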